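/- Let q be a prime power and F = F_q. Any two nonsingular tensors in F_q² ⊗ F_q² ⊗ F_q² are equivalent under the action of GL(2,q) × GL(2,q) × GL(2,q) composed with a permutation of the three factors, up to a nonzero scalar. In particular, the stabiliser of the Segre variety S_{2,2,2}(F_q) in PGL(8,q) acts transitively on the nonsingular points of PG(7,q). -/

import Mathlib

/-- The slices of a `2×2×2` hypercube along the first index. -/
def slice1 {F : Type*} (v : Fin 2 → Fin 2 → Fin 2 → F) (i : Fin 2) :
    Matrix (Fin 2) (Fin 2) F := Matrix.of fun j k => v i j k

/-- The slices of a `2×2×2` hypercube along the second index. -/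
def slice2 {F : Type*} (v : Fin 2 → Fin 2 → Fin 2 → F) (j : Fin 2) :
    Matrix (Fin 2) (Fin 2) F := Matrix.of fun i k => v i j k

/-- The slices of a `2×2×2` hypercube along the third index. -/
def slice3 {F : Type*} (v : Fin 2 → Fin 2 → Fin 2 → F) (k : Fin 2) :
    Matrix (Fin 2) (Fin 2) F := Matrix.of fun i j => v i j k

/-- A `2×2×2` hypercube (tensor in `F² ⊗ F² ⊗ F²` in coordinates) is
nonsingular if the contraction by every nonzero functional (with coordinates
`c` in the dual basis) along each of the three factors is an invertible
`2 × 2` matrix. -/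
def HNonsingular {F : Type*} [Field F] (v : Fin 2 → Fin 2 → Fin 2 → F) : Prop :=
  ∀ c : Fin 2 → F, c ≠ 0 →
    IsUnit (∑ i, c i • slice1 v i) ∧ IsUnit (∑ j, c j • slice2 v j) ∧
      IsUnit (∑ k, c k • slice3 v k)

/-- The action of `GL(2,F)³` on hypercubes. -/
def actGL {F : Type*} [Field F] (g₁ g₂ g₃ : Matrix (Fin 2) (Fin 2) F)
    (v : Fin 2 → Fin 2 → Fin 2 → F) : Fin 2 → Fin 2 → Fin 2 → F :=
  fun i j k => ∑ a, ∑ b, ∑ c, g₁ i a * g₂ j b * g₃ k c * v a b c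

/-- The action of `S₃` on hypercubes by permuting the three factors. -/
def permute {F : Type*} (σ : Equiv.Perm (Fin 3))
    (v : Fin 2 → Fin 2 → Fin 2 → F) : Fin 2 → Fin 2 → Fin 2 → F :=
  fun i j k => v (![i, j, k] (σ 0)) (![i, j, k] (σ 1)) (![i, j, k] (σ 2))

open Matrix Polynomial
set_option maxHeartbeats 1600000

namespace Stmt15Aux

open Matrix Polynomial
variable {F : Type*} [Field F]

def pairT (A B : Matrix (Fin 2) (Fin 2) F) : Fin 2 → Fin 2 → Fin 2 → F :=
  fun i j k => ![A, B] i j k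

lemma pairT_slice (v : Fin 2 → Fin 2 → Fin 2 → F) :
    pairT (slice1 v 0) (slice1 v 1) = v := by
  funext i j k; fin_cases i <;> rfl

lemma actGL_actGL (g₁ g₂ g₃ h₁ h₂ h₃ : Matrix (Fin 2) (Fin 2) F) (v) :
    actGL g₁ g₂ g₃ (actGL h₁ h₂ h₃ v) = actGL (g₁*h₁) (g₂*h₂) (g₃*h₃) v := by
  funext i j k
  simp only [actGL, Matrix.mul_apply, Fin.sum_univ_two]
  ring

lemma actGL_one (v : Fin 2 → Fin 2 → Fin 2 → F) : actGL 1 1 1 v = v := by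
  funext i j k
  simp only [actGL, Fin.sum_univ_two, Matrix.one_apply]
  fin_cases i <;> fin_cases j <;> fin_cases k <;> simp

lemma act_pair (R P Q A B : Matrix (Fin 2) (Fin 2) F) :
    actGL R P Q (pairT A B) =
      pairT (R 0 0 • (P*A*Qᵀ) + R 0 1 • (P*B*Qᵀ))
            (R 1 0 • (P*A*Qᵀ) + R 1 1 • (P*B*Qᵀ)) := by
  funext i j k
  fin_cases i <;>
    simp only [actGL, pairT, Fin.sum_univ_two, Matrix.mul_apply, Matrix.transpose_apply,
      Matrix.cons_val_zero, Matrix.cons_val_one, Matrix.head_cons, Matrix.add_apply,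
      Matrix.smul_apply, smul_eq_mul, Fin.isValue, Fin.mk_zero, Fin.mk_one] <;>
    ring

def Rel (v w : Fin 2 → Fin 2 → Fin 2 → F) : Prop :=
  ∃ g₁ g₂ g₃ : (Matrix (Fin 2) (Fin 2) F)ˣ, actGL ↑g₁ ↑g₂ ↑g₃ v = w

lemma Rel.trans {u v w : Fin 2 → Fin 2 → Fin 2 → F} (h1 : Rel u v) (h2 : Rel v w) : Rel u w := by
  obtain ⟨a1,a2,a3,ha⟩ := h1; obtain ⟨b1,b2,b3,hb⟩ := h2
  exact ⟨b1*a1, b2*a2, b3*a3, by rw [Units.val_mul, Units.val_mul, Units.val_mul,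
    ← actGL_actGL, ha, hb]⟩

lemma Rel.symm {u v : Fin 2 → Fin 2 → Fin 2 → F} (h : Rel u v) : Rel v u := by
  obtain ⟨a1,a2,a3,ha⟩ := h
  refine ⟨a1⁻¹, a2⁻¹, a3⁻¹, ?_⟩
  rw [← ha, actGL_actGL, ← Units.val_mul, ← Units.val_mul, ← Units.val_mul,
    inv_mul_cancel a1, inv_mul_cancel a2, inv_mul_cancel a3, Units.val_one, actGL_one]



variable {F : Type*} [Field F]

noncomputable def quad (A : Matrix (Fin 2) (Fin 2) F) : F[X] :=
  X ^ 2 + C (-Matrix.trace A) * X + C A.det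

lemma quad_monic (A : Matrix (Fin 2) (Fin 2) F) : (quad A).Monic := by
  unfold quad
  rw [add_assoc]
  exact monic_X_pow_add (lt_of_le_of_lt degree_linear_le (by norm_num))

lemma quad_natDegree (A : Matrix (Fin 2) (Fin 2) F) : (quad A).natDegree = 2 := by
  unfold quad
  compute_degree!

lemma quad_coeff_zero (A : Matrix (Fin 2) (Fin 2) F) : (quad A).coeff 0 = A.det := by
  simp [quad, coeff_X_pow]

lemma quad_coeff_one (A : Matrix (Fin 2) (Fin 2) F) :
    (quad A).coeff 1 = -Matrix.trace A := by
  simp [quad, coeff_X_pow]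

lemma aeval_quad (A B : Matrix (Fin 2) (Fin 2) F) :
    aeval B (quad A) = B * B - Matrix.trace A • B + A.det • 1 := by
  simp only [quad, map_add, _root_.map_mul, map_pow, aeval_X, aeval_C, pow_two,
    Algebra.algebraMap_eq_smul_one, smul_mul_assoc, one_mul, map_neg, neg_smul, neg_mul,
    smul_smul, mul_one, neg_one_mul]
  abel

lemma aeval_quad_self (A : Matrix (Fin 2) (Fin 2) F) : aeval A (quad A) = 0 := by
  rw [aeval_quad]
  ext i j
  fin_cases i <;> fin_cases j <;>
    simp [Matrix.mul_apply, Fin.sum_univ_two, Matrix.trace_fin_two, Matrix.det_fin_two,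
      Matrix.one_apply] <;> ring

lemma eval_quad (A : Matrix (Fin 2) (Fin 2) F) (x : F) :
    (quad A).eval x = (x • (1 : Matrix (Fin 2) (Fin 2) F) - A).det := by
  simp [quad, Matrix.det_fin_two, Matrix.trace_fin_two, Matrix.smul_apply, Matrix.sub_apply,
    Matrix.one_apply]
  ring

def NoEig (M : Matrix (Fin 2) (Fin 2) F) : Prop :=
  ∀ a b : F, ¬(a = 0 ∧ b = 0) → IsUnit (a • (1 : Matrix (Fin 2) (Fin 2) F) + b • M)

lemma NoEig.eval_ne {M : Matrix (Fin 2) (Fin 2) F} (h : NoEig M) (x : F) :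
    (quad M).eval x ≠ 0 := by
  rw [eval_quad]
  have h2 : x • (1 : Matrix (Fin 2) (Fin 2) F) - M = x • 1 + (-1 : F) • M := by
    rw [neg_one_smul, sub_eq_add_neg]
  rw [h2]
  have := (Matrix.isUnit_iff_isUnit_det _).mp (h x (-1) (by simp))
  exact this.ne_zero

lemma NoEig.irreducible {M : Matrix (Fin 2) (Fin 2) F} (h : NoEig M) :
    Irreducible (quad M) := by
  by_contra hc
  obtain ⟨c₁, c₂, h0, h1⟩ :=
    ((quad_monic M).not_irreducible_iff_exists_add_mul_eq_coeff (quad_natDegree M)).mp hc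
  rw [quad_coeff_zero] at h0
  rw [quad_coeff_one] at h1
  apply h.eval_ne (-c₁)
  simp only [quad, eval_add, eval_mul, eval_pow, eval_X, eval_C]
  rw [h0]
  linear_combination (-c₁) * h1



lemma exists_root_aux [Fintype F] (M N : Matrix (Fin 2) (Fin 2) F)
    (hM : Irreducible (quad M)) (hN : Irreducible (quad N)) :
    ∃ r : F[X], r.natDegree ≤ 1 ∧ aeval (aeval M r) (quad N) = 0 := by
  haveI fM : Fact (Irreducible (quad M)) := ⟨hM⟩
  haveI fN : Fact (Irreducible (quad N)) := ⟨hN⟩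
  set K := AdjoinRoot (quad M) with hK
  set L := AdjoinRoot (quad N) with hL
  let pbK := AdjoinRoot.powerBasis ((quad_monic M).ne_zero)
  let pbL := AdjoinRoot.powerBasis ((quad_monic N).ne_zero)
  letI : Fintype K := Module.fintypeOfFintype pbK.basis
  letI : Fintype L := Module.fintypeOfFintype pbL.basis
  have hcK : Fintype.card K = Fintype.card F ^ 2 := by
    rw [Module.card_fintype pbK.basis, Fintype.card_fin]
    simp only [pbK, AdjoinRoot.powerBasis_dim, quad_natDegree]
  have hcL : Fintype.card L = Fintype.card F ^ 2 := by
    rw [Module.card_fintype pbL.basis, Fintype.card_fin]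
    simp only [pbL, AdjoinRoot.powerBasis_dim, quad_natDegree]
  haveI iK : IsSplittingField F K (X ^ (Fintype.card F ^ 2) - X) :=
    hcK ▸ FiniteField.isSplittingField_sub K F
  haveI iL : IsSplittingField F L (X ^ (Fintype.card F ^ 2) - X) :=
    hcL ▸ FiniteField.isSplittingField_sub L F
  let e : L ≃ₐ[F] K :=
    (IsSplittingField.algEquiv L (X ^ (Fintype.card F ^ 2) - X)).trans
      (IsSplittingField.algEquiv K (X ^ (Fintype.card F ^ 2) - X)).symm
  let β : K := e (AdjoinRoot.root (quad N))
  have hβ : aeval β (quad N) = 0 := by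
    have := Polynomial.aeval_algHom_apply e.toAlgHom (AdjoinRoot.root (quad N)) (quad N)
    rw [AdjoinRoot.aeval_eq, AdjoinRoot.mk_self, map_zero] at this
    exact this
  obtain ⟨f, hf⟩ := AdjoinRoot.mk_surjective β
  refine ⟨f %ₘ quad M, ?_, ?_⟩
  · have h1 : quad M ≠ 1 := by
      intro h1
      have := quad_natDegree M
      rw [h1] at this
      simp at this
    have := natDegree_modByMonic_lt f (quad_monic M) h1
    have h2 := quad_natDegree M
    omega
  · have haM : aeval M (quad M) = 0 := aeval_quad_self M
    have hmod : aeval M (f %ₘ quad M) = aeval M f :=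
      aeval_modByMonic_eq_self_of_root haM
    rw [hmod]
    -- transfer the relation from K to matrices via divisibility
    have hmk : AdjoinRoot.mk (quad M) (f ^ 2 + C (-Matrix.trace N) * f + C N.det) = 0 := by
      have : aeval β (quad N)
          = AdjoinRoot.mk (quad M) (f ^ 2 + C (-Matrix.trace N) * f + C N.det) := by
        rw [← hf]
        have key : ∀ (p g : F[X]) (a b : F), aeval (AdjoinRoot.mk p g) (X ^ 2 + C a * X + C b)
            = AdjoinRoot.mk p (g ^ 2 + C a * g + C b) := by
          intro p g a b
          simp only [map_add, _root_.map_mul, map_pow, aeval_X, aeval_C, AdjoinRoot.mk_C]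
          rfl
        exact key _ _ _ _
      rw [← this, hβ]
    obtain ⟨g, hg⟩ := (AdjoinRoot.mk_eq_zero).mp hmk
    have hz : aeval M (f ^ 2 + C (-Matrix.trace N) * f + C N.det) = 0 := by
      rw [hg, _root_.map_mul, haM, zero_mul]
    calc aeval (aeval M f) (quad N)
        = aeval M (f ^ 2 + C (-Matrix.trace N) * f + C N.det) := by
          simp only [quad, map_add, _root_.map_mul, map_pow, aeval_X, aeval_C]
      _ = 0 := hz



lemma conj_comp {B : Matrix (Fin 2) (Fin 2) F} (t dl : F) (hB10 : B 1 0 ≠ 0)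
    (hB : B * B - t • B + dl • 1 = 0) :
    ∃ u : (Matrix (Fin 2) (Fin 2) F)ˣ, (↑u⁻¹ : Matrix (Fin 2) (Fin 2) F) * B *
      (↑u : Matrix (Fin 2) (Fin 2) F) = !![0, -dl; 1, t] := by
  have hBB : ∀ i j, (B*B) i j = t * B i j - dl * (1 : Matrix (Fin 2) (Fin 2) F) i j := by
    intro i j
    have h0 : (B * B - t • B + dl • (1 : Matrix (Fin 2) (Fin 2) F)) i j
        = (0 : Matrix (Fin 2) (Fin 2) F) i j := by rw [hB]
    simp only [Matrix.sub_apply, Matrix.add_apply, Matrix.smul_apply, smul_eq_mul,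
      Matrix.zero_apply] at h0
    linear_combination h0
  set P : Matrix (Fin 2) (Fin 2) F := !![1, B 0 0; 0, B 1 0] with hPdef
  have hPu : IsUnit P := by
    rw [Matrix.isUnit_iff_isUnit_det, hPdef, Matrix.det_fin_two_of, isUnit_iff_ne_zero]
    simpa using hB10
  have hBP : B * P = P * !![0, -dl; 1, t] := by
    ext i j
    fin_cases i <;> fin_cases j <;>
      simp only [hPdef, Matrix.mul_apply, Fin.sum_univ_two, Matrix.cons_val', Matrix.cons_val_zero,
        Matrix.cons_val_one, Matrix.head_cons, Matrix.head_fin_const, Matrix.of_apply,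
        Matrix.cons_val_fin_one, Matrix.empty_val', Fin.mk_zero, Fin.mk_one, Fin.isValue]
    · ring
    · have h1 := hBB 0 0
      simp [Matrix.mul_apply, Fin.sum_univ_two, Matrix.one_apply] at h1
      linear_combination h1
    · ring
    · have h1 := hBB 1 0
      simp [Matrix.mul_apply, Fin.sum_univ_two, Matrix.one_apply] at h1
      linear_combination h1
  refine ⟨hPu.unit, ?_⟩
  have hval : (↑hPu.unit : Matrix (Fin 2) (Fin 2) F) = P := hPu.unit_spec
  rw [← hval] at hBP
  rw [mul_assoc, hBP, ← mul_assoc, Units.inv_mul, one_mul]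

lemma similar_of_same_quad {B N : Matrix (Fin 2) (Fin 2) F} (t dl : F)
    (hB10 : B 1 0 ≠ 0) (hN10 : N 1 0 ≠ 0)
    (hB : B * B - t • B + dl • 1 = 0) (hN : N * N - t • N + dl • 1 = 0) :
    ∃ g : (Matrix (Fin 2) (Fin 2) F)ˣ, (↑g : Matrix (Fin 2) (Fin 2) F) * B *
      (↑g⁻¹ : Matrix (Fin 2) (Fin 2) F) = N := by
  obtain ⟨uB, hCB⟩ := conj_comp t dl hB10 hB
  obtain ⟨uN, hCN⟩ := conj_comp t dl hN10 hN
  refine ⟨uN * uB⁻¹, ?_⟩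
  rw [← hCN] at hCB
  calc (↑(uN * uB⁻¹) : Matrix (Fin 2) (Fin 2) F) * B * ↑(uN * uB⁻¹)⁻¹
      = ↑uN * ((↑uB⁻¹ : Matrix (Fin 2) (Fin 2) F) * B * ↑uB) * ↑uN⁻¹ := by
        rw [_root_.mul_inv_rev, inv_inv, Units.val_mul, Units.val_mul]
        noncomm_ring
    _ = ↑uN * ((↑uN⁻¹ : Matrix (Fin 2) (Fin 2) F) * N * ↑uN) * ↑uN⁻¹ := by rw [hCB]
    _ = N := by
        rw [mul_assoc (↑uN⁻¹ : Matrix (Fin 2) (Fin 2) F) N ↑uN, Units.mul_inv_cancel_left,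
          mul_assoc, Units.mul_inv, mul_one]


lemma NoEig.off_ne {B : Matrix (Fin 2) (Fin 2) F} (h : NoEig B) : B 1 0 ≠ 0 := by
  intro h10
  have hu := (Matrix.isUnit_iff_isUnit_det _).mp (h (-(B 0 0)) 1 (by simp))
  rw [isUnit_iff_ne_zero] at hu
  apply hu
  rw [Matrix.det_fin_two]
  simp [Matrix.add_apply, Matrix.smul_apply, Matrix.one_apply, h10]

lemma NoEig.affine {M : Matrix (Fin 2) (Fin 2) F} (h : NoEig M) (c d : F) (hd : d ≠ 0) :
    NoEig (c • 1 + d • M) := by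
  intro a b hab
  have he : a • (1 : Matrix (Fin 2) (Fin 2) F) + b • (c • 1 + d • M)
      = (a + b * c) • 1 + (b * d) • M := by
    rw [smul_add, smul_smul, smul_smul, ← add_assoc, ← add_smul]
  rw [he]
  apply h
  rintro ⟨h1, h2⟩
  rcases mul_eq_zero.mp h2 with hb | hdd
  · apply hab
    constructor
    · rw [hb, mul_comm] at h1; simpa using h1
    · exact hb
  · exact hd hdd

lemma normalize (w : Fin 2 → Fin 2 → Fin 2 → F) (hw : HNonsingular w) :
    ∃ Mw : Matrix (Fin 2) (Fin 2) F, NoEig Mw ∧ Rel w (pairT 1 Mw) := by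
  have lin : ∀ a b : F, ¬(a = 0 ∧ b = 0) →
      IsUnit (a • slice1 w 0 + b • slice1 w 1) := by
    intro a b hab
    have hc : ![a, b] ≠ 0 := by
      intro h
      exact hab ⟨by simpa using congrFun h 0, by simpa using congrFun h 1⟩
    have := (hw ![a, b] hc).1
    simpa [Fin.sum_univ_two] using this
  have h0 : IsUnit (slice1 w 0) := by simpa using lin 1 0 (by simp)
  set u := h0.unit with hu
  have hval : (↑u : Matrix (Fin 2) (Fin 2) F) = slice1 w 0 := h0.unit_spec
  set Mw : Matrix (Fin 2) (Fin 2) F := (↑u⁻¹ : Matrix (Fin 2) (Fin 2) F) * slice1 w 1 with hMw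
  have hinv1 : (↑u⁻¹ : Matrix (Fin 2) (Fin 2) F) * slice1 w 0 = 1 := by
    rw [← hval, Units.inv_mul]
  refine ⟨Mw, ?_, ?_⟩
  · intro a b hab
    have he : a • (1 : Matrix (Fin 2) (Fin 2) F) + b • Mw
        = (↑u⁻¹ : Matrix (Fin 2) (Fin 2) F) * (a • slice1 w 0 + b • slice1 w 1) := by
      rw [mul_add, mul_smul_comm, mul_smul_comm, hinv1, hMw]
    rw [he]
    exact (Units.isUnit u⁻¹).mul (lin a b hab)
  · refine ⟨1, u⁻¹, 1, ?_⟩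
    conv_lhs => rw [← pairT_slice w]
    rw [Units.val_one, act_pair]
    have e00 : (1 : Matrix (Fin 2) (Fin 2) F) 0 0 = 1 := Matrix.one_apply_eq 0
    have e01 : (1 : Matrix (Fin 2) (Fin 2) F) 0 1 = 0 := Matrix.one_apply_ne (by decide)
    have e10 : (1 : Matrix (Fin 2) (Fin 2) F) 1 0 = 0 := Matrix.one_apply_ne (by decide)
    have e11 : (1 : Matrix (Fin 2) (Fin 2) F) 1 1 = 1 := Matrix.one_apply_eq 1
    rw [e00, e01, e10, e11, Matrix.transpose_one, mul_one, mul_one, one_smul, one_smul,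
      zero_smul, zero_smul, add_zero, zero_add, hinv1]

lemma rel_linear (M : Matrix (Fin 2) (Fin 2) F) (c d : F) (hd : d ≠ 0) :
    Rel (pairT 1 M) (pairT 1 (c • 1 + d • M)) := by
  have hR : IsUnit (!![1, 0; c, d] : Matrix (Fin 2) (Fin 2) F) := by
    rw [Matrix.isUnit_iff_isUnit_det, Matrix.det_fin_two_of, isUnit_iff_ne_zero]
    simpa using hd
  refine ⟨hR.unit, 1, 1, ?_⟩
  rw [hR.unit_spec, Units.val_one, act_pair, Matrix.transpose_one]
  simp only [Matrix.of_apply, Matrix.cons_val', Matrix.cons_val_zero, Matrix.cons_val_one,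
    Matrix.head_cons, Matrix.head_fin_const, Matrix.empty_val', Matrix.cons_val_fin_one,
    one_mul, mul_one]
  rw [one_smul, zero_smul, add_zero]

lemma rel_conj (B N : Matrix (Fin 2) (Fin 2) F) (g : (Matrix (Fin 2) (Fin 2) F)ˣ)
    (hg : (↑g : Matrix (Fin 2) (Fin 2) F) * B * (↑g⁻¹ : Matrix (Fin 2) (Fin 2) F) = N) :
    Rel (pairT 1 B) (pairT 1 N) := by
  refine ⟨1, g, ⟨(↑g⁻¹ : Matrix (Fin 2) (Fin 2) F)ᵀ, (↑g : Matrix (Fin 2) (Fin 2) F)ᵀ,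
    by rw [← Matrix.transpose_mul, Units.mul_inv, Matrix.transpose_one],
    by rw [← Matrix.transpose_mul, Units.inv_mul, Matrix.transpose_one]⟩, ?_⟩
  rw [Units.val_one, act_pair]
  have e00 : (1 : Matrix (Fin 2) (Fin 2) F) 0 0 = 1 := Matrix.one_apply_eq 0
  have e01 : (1 : Matrix (Fin 2) (Fin 2) F) 0 1 = 0 := Matrix.one_apply_ne (by decide)
  have e10 : (1 : Matrix (Fin 2) (Fin 2) F) 1 0 = 0 := Matrix.one_apply_ne (by decide)
  have e11 : (1 : Matrix (Fin 2) (Fin 2) F) 1 1 = 1 := Matrix.one_apply_eq 1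
  rw [e00, e01, e10, e11, one_smul, one_smul, zero_smul, zero_smul, add_zero, zero_add]
  show pairT ((↑g : Matrix (Fin 2) (Fin 2) F) * 1 * (↑g⁻¹ : Matrix (Fin 2) (Fin 2) F)ᵀᵀ)
      ((↑g : Matrix (Fin 2) (Fin 2) F) * B * (↑g⁻¹ : Matrix (Fin 2) (Fin 2) F)ᵀᵀ) = pairT 1 N
  rw [Matrix.transpose_transpose, mul_one, Units.mul_inv, hg]

lemma rel_main [Fintype F] (v v' : Fin 2 → Fin 2 → Fin 2 → F)
    (hv : HNonsingular v) (hv' : HNonsingular v') : Rel v v' := by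
  obtain ⟨M, hM, relv⟩ := normalize v hv
  obtain ⟨N, hN, relv'⟩ := normalize v' hv'
  obtain ⟨r, hr1, hr0⟩ := exists_root_aux M N hM.irreducible hN.irreducible
  set c := r.coeff 0 with hc
  set d := r.coeff 1 with hdc
  have hrX : r = C d * X + C c := eq_X_add_C_of_natDegree_le_one hr1
  have haev : aeval (c • (1 : Matrix (Fin 2) (Fin 2) F) + d • M) (quad N) = 0 := by
    have : aeval M r = c • (1 : Matrix (Fin 2) (Fin 2) F) + d • M := by
      rw [hrX]
      simp only [map_add, _root_.map_mul, aeval_X, aeval_C, Algebra.algebraMap_eq_smul_one,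
        smul_mul_assoc, one_mul]
      rw [add_comm]
    rw [← this]
    exact hr0
  have hd : d ≠ 0 := by
    intro hd0
    rw [hd0, zero_smul, add_zero, ← Algebra.algebraMap_eq_smul_one,
      aeval_algebraMap_apply_eq_algebraMap_eval] at haev
    have : (quad N).eval c = 0 := by
      apply (algebraMap F (Matrix (Fin 2) (Fin 2) F)).injective
      rw [haev, map_zero]
    exact hN.eval_ne c this
  set B : Matrix (Fin 2) (Fin 2) F := c • 1 + d • M with hB
  have hNB : NoEig B := hM.affine c d hd
  have hBq : B * B - Matrix.trace N • B + N.det • 1 = 0 := by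
    rw [← aeval_quad]; exact haev
  have hNq : N * N - Matrix.trace N • N + N.det • 1 = 0 := by
    rw [← aeval_quad]; exact aeval_quad_self N
  obtain ⟨g, hg⟩ := similar_of_same_quad (Matrix.trace N) N.det hNB.off_ne hN.off_ne hBq hNq
  exact relv.trans ((rel_linear M c d hd).trans ((rel_conj B N g hg).trans relv'.symm))

end Stmt15Aux

lemma permute_one {F : Type*} (v : Fin 2 → Fin 2 → Fin 2 → F) : permute 1 v = v := by
  funext i j k
  simp [permute]

theorem stmt15 (F : Type*) [Field F] [Fintype F]
    (v v' : Fin 2 → Fin 2 → Fin 2 → F)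
    (hv : HNonsingular v) (hv' : HNonsingular v') :
    ∃ (σ : Equiv.Perm (Fin 3)) (g₁ g₂ g₃ : GL (Fin 2) F) (c : Fˣ),
      actGL (g₁ : Matrix (Fin 2) (Fin 2) F) (g₂ : Matrix (Fin 2) (Fin 2) F)
        (g₃ : Matrix (Fin 2) (Fin 2) F) (permute σ v) = (c : F) • v' := by
  obtain ⟨g₁, g₂, g₃, h⟩ := Stmt15Aux.rel_main v v' hv hv'
  refine ⟨1, g₁, g₂, g₃, 1, ?_⟩
  rw [permute_one, Units.val_one, one_smul]
  exact h
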